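/- arXiv:1805.12459 — 3 statements merged into one kernel-verified Lean document; each statement's English description precedes it below -/
import Mathlib

section
/- For 0 ≤ ρ < 1 and r > 0 and u ≥ 0, the compound geometric tail with Erlang summands satisfies the identity (1 − ρ) Σ_{n=1}^∞ ρ^n ∫_u^∞ t^{n−1} e^{−t/r} / ((n−1)! r^n) dt = ρ e^{−u(1−ρ)/r}. -/
open MeasureTheory

open Set Filter Real in
private lemma aux_tendsto {b : ℝ} (hb : 0 < b) (n : ℕ) :
    Tendsto (fun t : ℝ => t ^ n * Real.exp (-(b * t))) atTop (nhds 0) := by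
  have h1 : Tendsto ((fun x : ℝ => x ^ n * Real.exp (-x)) ∘ fun t : ℝ => b * t)
      atTop (nhds 0) :=
    (tendsto_pow_mul_exp_neg_atTop_nhds_zero n).comp (tendsto_id.const_mul_atTop hb)
  have h2 : Tendsto (fun t : ℝ => (b⁻¹) ^ n * ((b * t) ^ n * Real.exp (-(b * t))))
      atTop (nhds ((b⁻¹) ^ n * 0)) := h1.const_mul _
  rw [mul_zero] at h2
  refine h2.congr (fun t => ?_)
  rw [mul_pow]
  field_simp
  ring_nf
  rw [← mul_pow, mul_inv_cancel₀ hb.ne', one_pow, one_mul]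

open Set Filter Real in
private lemma aux_integrable {r : ℝ} (hr : 0 < r) (n : ℕ) (a : ℝ) :
    IntegrableOn (fun t : ℝ => t ^ n * Real.exp (-t / r)) (Ioi a) := by
  have hb : (0 : ℝ) < 1 / (2 * r) := by positivity
  refine integrable_of_isBigO_exp_neg hb
    (Continuous.continuousOn (by continuity)) ?_
  have heq : (fun t : ℝ => t ^ n * Real.exp (-t / r)) =
      fun t => (t ^ n * Real.exp (-(1 / (2 * r) * t))) * Real.exp (-(1 / (2 * r)) * t) := by
    funext t
    rw [mul_assoc, ← Real.exp_add]
    congr 1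
    field_simp
    ring
  rw [heq]
  have h1 : (fun t : ℝ => t ^ n * Real.exp (-(1 / (2 * r) * t))) =O[atTop]
      (fun _ : ℝ => (1 : ℝ)) := (aux_tendsto hb n).isBigO_one ℝ
  simpa using h1.mul (Asymptotics.isBigO_refl (fun t : ℝ => Real.exp (-(1 / (2 * r)) * t)) atTop)

open Set Real in
private lemma aux_integral_Ioi_zero {r : ℝ} (hr : 0 < r) (n : ℕ) :
    ∫ t in Ioi (0 : ℝ), t ^ n * Real.exp (-t / r) = r ^ (n + 1) * n.factorial := by
  have ha : (0 : ℝ) < (n : ℝ) + 1 := by positivity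
  have hr' : (0 : ℝ) < r⁻¹ := by positivity
  have := Real.integral_rpow_mul_exp_neg_mul_Ioi ha hr'
  have heq : (fun t : ℝ => t ^ (((n : ℝ) + 1) - 1) * Real.exp (-(r⁻¹ * t))) =
      fun t : ℝ => t ^ n * Real.exp (-t / r) := by
    funext t
    rw [show ((n : ℝ) + 1) - 1 = (n : ℝ) by ring, Real.rpow_natCast]
    congr 1
    ring
  rw [heq] at this
  rw [this, one_div, inv_inv, Real.Gamma_nat_eq_factorial,
    show ((n : ℝ) + 1) = ((n + 1 : ℕ) : ℝ) by push_cast; ring, Real.rpow_natCast]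

set_option maxHeartbeats 1600000 in
theorem stmt_8 (ρ r u : ℝ) (hρ0 : 0 ≤ ρ) (hρ1 : ρ < 1) (hr : 0 < r) (hu : 0 ≤ u) :
    (1 - ρ) * (∑' n : ℕ,
        ρ ^ (n + 1) *
          ∫ t in Set.Ioi u, t ^ n * Real.exp (-t/r) / (n.factorial * r ^ (n + 1)))
      = ρ * Real.exp (-u * (1 - ρ) / r) := by
  classical
  set F : ℕ → ℝ → ℝ := fun n t => ρ ^ (n + 1) * (t ^ n * Real.exp (-t / r) / (n.factorial * r ^ (n + 1)))
    with hF
  have hrne : r ≠ 0 := ne_of_gt hr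
  have hfac : ∀ n : ℕ, ((n.factorial : ℝ)) ≠ 0 := fun n => Nat.cast_ne_zero.2 n.factorial_ne_zero
  -- integrability of F n on any Ioi a
  have hFint : ∀ (n : ℕ) (a : ℝ), IntegrableOn (F n) (Set.Ioi a) := by
    intro n a
    have h1 := (aux_integrable hr n a).const_mul (ρ ^ (n + 1) / (n.factorial * r ^ (n + 1)))
    refine h1.congr (Filter.Eventually.of_forall (fun t => ?_))
    simp only [hF]
    ring
  -- value of the integral of F n over Ioi 0
  have hFval : ∀ n : ℕ, ∫ t in Set.Ioi (0 : ℝ), F n t = ρ ^ (n + 1) := by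
    intro n
    simp only [hF]
    rw [show (fun t : ℝ => ρ ^ (n + 1) * (t ^ n * Real.exp (-t / r) / (n.factorial * r ^ (n + 1))))
        = fun t : ℝ => (ρ ^ (n + 1) / (n.factorial * r ^ (n + 1))) * (t ^ n * Real.exp (-t / r)) by
      funext t; ring]
    rw [integral_const_mul, aux_integral_Ioi_zero hr n]
    have hA : ((n.factorial : ℝ)) * r ^ (n + 1) ≠ 0 := by positivity
    rw [mul_comm (r ^ (n + 1)) ((n.factorial : ℝ)), div_mul_cancel₀ _ hA]
  -- nonnegativity of F n on Ioi u
  have hFnn : ∀ n : ℕ, ∀ t ∈ Set.Ioi u, 0 ≤ F n t := by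
    intro n t ht
    have ht0 : 0 ≤ t := le_trans hu (le_of_lt ht)
    have : 0 ≤ t ^ n * Real.exp (-t / r) / (n.factorial * r ^ (n + 1)) := by positivity
    positivity
  -- bound: integral over Ioi u is at most ρ^(n+1)
  have hFbound : ∀ n : ℕ, ∫ t in Set.Ioi u, F n t ≤ ρ ^ (n + 1) := by
    intro n
    rw [← hFval n]
    refine setIntegral_mono_set (hFint n 0) ?_ (HasSubset.Subset.eventuallyLE (Set.Ioi_subset_Ioi hu))
    filter_upwards [ae_restrict_mem measurableSet_Ioi] with t ht
    have ht0 : 0 ≤ t := le_of_lt ht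
    have : 0 ≤ t ^ n * Real.exp (-t / r) / (n.factorial * r ^ (n + 1)) := by positivity
    simp only [hF, Pi.zero_apply]
    positivity
  -- measurability
  have hFmeas : ∀ n : ℕ, AEStronglyMeasurable (F n) (volume.restrict (Set.Ioi u)) := by
    intro n
    exact (Continuous.aestronglyMeasurable (by continuity))
  -- lintegral finiteness
  have hlint : ∑' n : ℕ, ∫⁻ t in Set.Ioi u, ‖F n t‖₊ ≠ ⊤ := by
    have hterm : ∀ n : ℕ, ∫⁻ t in Set.Ioi u, (‖F n t‖₊ : ENNReal) ≤ ENNReal.ofReal (ρ ^ (n + 1)) := by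
      intro n
      have hnn : 0 ≤ᵐ[volume.restrict (Set.Ioi u)] F n := by
        filter_upwards [ae_restrict_mem measurableSet_Ioi] with t ht using hFnn n t ht
      have h1 : ∫⁻ t in Set.Ioi u, (‖F n t‖₊ : ENNReal)
          = ∫⁻ t in Set.Ioi u, ENNReal.ofReal (F n t) := by
        refine lintegral_congr_ae ?_
        filter_upwards [hnn] with t ht
        exact Real.enorm_eq_ofReal ht
      rw [h1, ← ofReal_integral_eq_lintegral_ofReal (hFint n u) hnn]
      exact ENNReal.ofReal_le_ofReal (hFbound n)
    have hgeo : ∑' n : ℕ, ENNReal.ofReal (ρ ^ (n + 1)) ≠ ⊤ := by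
      have hlt1 : ENNReal.ofReal ρ < 1 := by
        rw [← ENNReal.ofReal_one]
        exact ENNReal.ofReal_lt_ofReal_iff_of_nonneg hρ0 |>.2 hρ1
      have hle : ∀ n : ℕ, ENNReal.ofReal (ρ ^ (n + 1)) ≤ (ENNReal.ofReal ρ) ^ n := by
        intro n
        rw [ENNReal.ofReal_pow hρ0]
        exact le_trans (pow_le_pow_of_le_one (by positivity) hlt1.le (Nat.le_succ n)) le_rfl
      refine ne_top_of_le_ne_top ?_ (ENNReal.tsum_le_tsum hle)
      rw [ENNReal.tsum_geometric]
      rw [Ne, ENNReal.inv_eq_top, tsub_eq_zero_iff_le]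
      exact fun h => absurd (lt_of_le_of_lt h hlt1) (lt_irrefl _)
    exact ne_top_of_le_ne_top hgeo (ENNReal.tsum_le_tsum hterm)
  -- swap sum and integral
  have hswap : ∑' n : ℕ, ∫ t in Set.Ioi u, F n t = ∫ t in Set.Ioi u, ∑' n : ℕ, F n t :=
    (integral_tsum hFmeas hlint).symm
  -- pointwise value of the series
  have hsum : ∀ t : ℝ, ∑' n : ℕ, F n t = (ρ / r) * Real.exp (-((1 - ρ) / r * t)) := by
    intro t
    have h1 : ∀ n : ℕ, F n t = (Real.exp (-t / r) * (ρ / r)) * ((ρ * t / r) ^ n / n.factorial) := by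
      intro n
      simp only [hF]
      rw [div_pow, mul_pow]
      field_simp
      ring
    calc ∑' n : ℕ, F n t
        = ∑' n : ℕ, (Real.exp (-t / r) * (ρ / r)) * ((ρ * t / r) ^ n / n.factorial) :=
          tsum_congr h1
      _ = (Real.exp (-t / r) * (ρ / r)) * ∑' n : ℕ, ((ρ * t / r) ^ n / n.factorial) :=
          tsum_mul_left
      _ = (Real.exp (-t / r) * (ρ / r)) * Real.exp (ρ * t / r) := by
          rw [Real.exp_eq_exp_ℝ, NormedSpace.exp_eq_tsum_div]
      _ = (ρ / r) * Real.exp (-((1 - ρ) / r * t)) := by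
          rw [mul_comm (Real.exp (-t / r)) (ρ / r), mul_assoc, ← Real.exp_add]
          congr 2
          field_simp
          ring
  -- the final integral
  have hc : (0 : ℝ) < (1 - ρ) / r := by
    have : 0 < 1 - ρ := by linarith
    positivity
  have hfinal : ∫ t in Set.Ioi u, (ρ / r) * Real.exp (-((1 - ρ) / r * t))
      = (ρ / r) * (((1 - ρ) / r)⁻¹ * Real.exp (-((1 - ρ) / r * u))) := by
    rw [integral_const_mul]
    congr 1
    have := integral_comp_mul_left_Ioi (fun x : ℝ => Real.exp (-x)) u hc
    simp only [smul_eq_mul] at this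
    rw [this, integral_exp_neg_Ioi]
  -- put everything together
  have hLHS : (∑' n : ℕ,
      ρ ^ (n + 1) * ∫ t in Set.Ioi u, t ^ n * Real.exp (-t/r) / (n.factorial * r ^ (n + 1)))
      = ∑' n : ℕ, ∫ t in Set.Ioi u, F n t := by
    refine tsum_congr (fun n => ?_)
    rw [← integral_const_mul]
  rw [hLHS, hswap]
  have : ∫ t in Set.Ioi u, ∑' n : ℕ, F n t
      = ∫ t in Set.Ioi u, (ρ / r) * Real.exp (-((1 - ρ) / r * t)) := by
    refine integral_congr_ae (Filter.Eventually.of_forall (fun t => hsum t))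
  rw [this, hfinal]
  have hρ1' : (1 : ℝ) - ρ ≠ 0 := by linarith
  rw [show -((1 - ρ) / r * u) = -u * (1 - ρ) / r by ring]
  field_simp
end

section
/- In the exponential system the integrated tail distribution of a group Q is exactly exponential: if F_j(x) = 1 − e^{−x/μ_j} and the weights are W^i_j = 1{Q∼j} r^Q / (Σ_{k∈Q} 1{k∼j} μ_j), then F^Q_I(x) = (Σ_j (Σ_{i∈Q} A^i_j) λ μ_j)^{−1} Σ_j λ 1{Q∼j} ∫_0^x \bar F_j(y / Σ_{i∈Q} A^i_j) dy = 1 − e^{−x/r^Q} for all x ≥ 0, provided deg(Q) > 0. -/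
open Finset MeasureTheory Classical

theorem int_exp_aux (c x : ℝ) (hc : c ≠ 0) :
    ∫ y in (0:ℝ)..x, Real.exp (-(y/c)) = c * (1 - Real.exp (-x/c)) := by
  have h := intervalIntegral.inv_mul_integral_comp_div (a := 0) (b := x)
    (f := fun y => Real.exp (-y)) (c := c)
  have h2 : (∫ y in (0/c)..(x/c), Real.exp (-y)) = 1 - Real.exp (-(x/c)) := by
    simp [← Real.exp_neg, integral_exp]
  rw [h2] at h
  field_simp at h ⊢
  linarith [h]

theorem stmt_9 (q d : ℕ) (e : Fin q → Fin d → Bool) (Q : Finset (Fin q))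
    (lam rQ : ℝ) (hlam : 0 < lam) (hrQ : 0 < rQ)
    (mu : Fin d → ℝ) (hmu : ∀ j, 0 < mu j)
    (hdeg : ∃ i ∈ Q, ∃ j, e i j = true)
    (ind : Fin d → ℝ)
    (hind : ∀ j, ind j = if (∃ i ∈ Q, e i j = true) then 1 else 0)
    (A : Fin q → Fin d → ℝ)
    (hA : ∀ i j, A i j = (if e i j = true then (1:ℝ) else 0) *
        (ind j * rQ / ((∑ k ∈ Q, if e k j = true then (1:ℝ) else 0) * mu j))) :
    ∀ x : ℝ, 0 ≤ x →
      (∑ j, (∑ i ∈ Q, A i j) * (lam * mu j))⁻¹ *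
        ∑ j, lam * ind j *
          ∫ y in (0:ℝ)..x, Real.exp (-(y / (∑ i ∈ Q, A i j)) / mu j)
      = 1 - Real.exp (-x / rQ) := by
  intro x hx
  set E := Real.exp (-x / rQ) with hE
  -- sum of A over Q
  have hSA : ∀ j, (∑ i ∈ Q, A i j) =
      if (∃ i ∈ Q, e i j = true) then rQ / mu j else 0 := by
    intro j
    by_cases h : ∃ i ∈ Q, e i j = true
    · obtain ⟨i0, hi0, hij0⟩ := h
      have hdpos : (0:ℝ) < ∑ k ∈ Q, if e k j = true then (1:ℝ) else 0 :=
        Finset.sum_pos' (f := fun k => if e k j = true then (1:ℝ) else 0)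
          (fun k _ => by by_cases hc : e k j = true <;> simp [hc])
          ⟨i0, hi0, by simp [hij0]⟩
      have hex : ∃ i ∈ Q, e i j = true := ⟨i0, hi0, hij0⟩
      have hindj : ind j = 1 := by rw [hind, if_pos hex]
      rw [if_pos hex]
      set D := (∑ k ∈ Q, if e k j = true then (1:ℝ) else 0) with hD
      have : (∑ i ∈ Q, A i j) = D * (rQ / (D * mu j)) := by
        rw [Finset.sum_mul]
        exact Finset.sum_congr rfl fun i _ => by rw [hA, hindj, one_mul]
      rw [this, mul_div_assoc', mul_div_mul_left _ _ hdpos.ne']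
    · rw [if_neg h]
      apply Finset.sum_eq_zero
      intro i hi
      have : e i j = false := by
        by_contra hc
        exact h ⟨i, hi, by simpa using hc⟩
      rw [hA, this]; simp
  have hind' : ∀ j, ind j = if (∃ i ∈ Q, e i j = true) then (1:ℝ) else 0 := hind
  -- denominator term
  have hden : ∀ j : Fin d, (∑ i ∈ Q, A i j) * (lam * mu j) =
      if (∃ i ∈ Q, e i j = true) then rQ * lam else 0 := by
    intro j
    rw [hSA]
    by_cases h : ∃ i ∈ Q, e i j = true
    · rw [if_pos h, if_pos h]
      have hm : mu j ≠ 0 := (hmu j).ne'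
      field_simp
    · rw [if_neg h, if_neg h, zero_mul]
  -- numerator term
  have hnum : ∀ j : Fin d, lam * ind j *
      (∫ y in (0:ℝ)..x, Real.exp (-(y / (∑ i ∈ Q, A i j)) / mu j)) =
      if (∃ i ∈ Q, e i j = true) then lam * rQ * (1 - E) else 0 := by
    intro j
    rw [hSA, hind']
    by_cases h : ∃ i ∈ Q, e i j = true
    · rw [if_pos h, if_pos h, if_pos h]
      have hm := (hmu j).ne'
      have harg : ∀ y : ℝ, -(y / (rQ / mu j)) / mu j = -(y / rQ) := by
        intro y; field_simp
      have : (∫ y in (0:ℝ)..x, Real.exp (-(y / (rQ / mu j)) / mu j)) =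
          ∫ y in (0:ℝ)..x, Real.exp (-(y / rQ)) := by
        apply intervalIntegral.integral_congr
        intro y _
        simp only [harg]
      rw [this, int_exp_aux rQ x hrQ.ne', hE]
      ring
    · rw [if_neg h, if_neg h, if_neg h]
      ring
  rw [Finset.sum_congr rfl fun j _ => hden j,
      Finset.sum_congr rfl fun j _ => hnum j]
  rw [← Finset.sum_filter, ← Finset.sum_filter]
  rw [Finset.sum_const, Finset.sum_const]
  set n := (Finset.univ.filter fun j : Fin d => ∃ i ∈ Q, e i j = true).card with hn
  have hnpos : 0 < n := by
    obtain ⟨i, hi, j, hj⟩ := hdeg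
    apply Finset.card_pos.mpr
    exact ⟨j, Finset.mem_filter.mpr ⟨Finset.mem_univ _, ⟨i, hi, hj⟩⟩⟩
  have hn0 : (n : ℝ) ≠ 0 := Nat.cast_ne_zero.mpr hnpos.ne'
  rw [nsmul_eq_mul, nsmul_eq_mul]
  field_simp
end

section
/- In the Bernoulli network with deterministic weights W^i_j = 1/c_j for all agents, and P^Q = (1/deg(Q)) Σ_{i∈Q} Σ_{j=1}^d 1{i∼j} ρ_j (interpreted as 0 when deg(Q)=0), one has E[P^Q] = ((1 − (1−p)^{d|Q|})/d) Σ_{j=1}^d ρ_j, where all edge indicators are i.i.d. Bernoulli(p). Consequently E[P^Q] < 1 if and only if the average (1/d)Σ_j ρ_j < 1/(1 − (1−p)^{d|Q|}). -/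
open Finset MeasureTheory

section aux
variable {ι : Type*} [Fintype ι] [DecidableEq ι]

private lemma sum_fun_bool (g : ι → Bool → ℝ) :
    ∑ ω : ι → Bool, ∏ i, g i (ω i) = ∏ i, (g i true + g i false) := by
  calc ∑ ω : ι → Bool, ∏ i, g i (ω i)
      = ∑ ω ∈ Fintype.piFinset (fun _ : ι => (univ : Finset Bool)), ∏ i, g i (ω i) := by
        rw [Fintype.piFinset_univ]
    _ = ∏ i, ∑ b, g i b := Finset.sum_prod_piFinset _ _
    _ = ∏ i, (g i true + g i false) := by simp

private lemma key (E : Finset ι) (hE : E.Nonempty) (p : ℝ) (hp0 : 0 ≤ p) (hp1 : p ≤ 1)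
    (r : ι → ℝ) :
    ∑ ω : ι → Bool, (∏ i, (if ω i then p else 1 - p)) *
      ((∑ e ∈ E, if ω e then r e else 0) / (∑ e ∈ E, if ω e then (1:ℝ) else 0))
    = (1 - (1 - p) ^ E.card) / E.card * ∑ e ∈ E, r e := by
  set w : (ι → Bool) → ℝ := fun ω => ∏ i, (if ω i then p else 1 - p) with hw
  set T : (ι → Bool) → ℝ := fun ω => ∑ e ∈ E, if ω e then (1:ℝ) else 0 with hT
  set F : ι → ℝ := fun e => ∑ ω : ι → Bool, w ω * (if ω e then (1:ℝ) else 0) / T ω with hF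
  have hTzero : ∀ ω, T ω = 0 ↔ ∀ e ∈ E, ω e = false := by
    intro ω
    rw [hT, Finset.sum_eq_zero_iff_of_nonneg (fun e _ => by positivity)]
    refine forall₂_congr fun e _ => ?_
    cases h : ω e <;> simp
  -- sum of F over E
  have hsumF : ∑ e ∈ E, F e = 1 - (1 - p) ^ E.card := by
    rw [hF, Finset.sum_comm]
    have h1 : ∀ ω : ι → Bool, ∑ e ∈ E, w ω * (if ω e then (1:ℝ) else 0) / T ω
        = w ω - (if T ω = 0 then w ω else 0) := by
      intro ω
      rw [← Finset.sum_div, ← Finset.mul_sum]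
      have hTdef : (∑ i ∈ E, if ω i = true then (1:ℝ) else 0) = T ω := rfl
      rw [hTdef]
      by_cases h : T ω = 0
      · simp [h]
      · rw [mul_div_assoc, div_self h, mul_one]
        simp [h]
    simp only [h1]
    rw [Finset.sum_sub_distrib]
    have hw1 : ∑ ω : ι → Bool, w ω = 1 := by
      have h : ∑ ω : ι → Bool, w ω = ∏ _i : ι,
          ((if (true : Bool) = true then p else 1 - p)
            + (if (false : Bool) = true then p else 1 - p)) :=
        sum_fun_bool fun _ b => if b = true then p else 1 - p
      rw [h]
      simp
    have hw2 : ∑ ω : ι → Bool, (if T ω = 0 then w ω else 0) = (1 - p) ^ E.card := by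
      have hpt : ∀ ω : ι → Bool, (if T ω = 0 then w ω else 0)
          = ∏ i, (if i ∈ E ∧ ω i = true then (0:ℝ) else (if ω i = true then p else 1 - p)) := by
        intro ω
        by_cases h : T ω = 0
        · rw [if_pos h, hw]
          refine Finset.prod_congr rfl fun i _ => ?_
          by_cases hiE : i ∈ E
          · have hfa := (hTzero ω).mp h i hiE
            simp [hfa, hiE]
          · simp [hiE]
        · rw [if_neg h]
          have hex : ∃ e ∈ E, ω e = true := by
            by_contra hcon
            push_neg at hcon
            exact h ((hTzero ω).mpr fun e he => Bool.eq_false_iff.mpr (hcon e he))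
          obtain ⟨e, heE, het⟩ := hex
          exact (Finset.prod_eq_zero (Finset.mem_univ e) (by simp [heE, het])).symm
      calc ∑ ω : ι → Bool, (if T ω = 0 then w ω else 0)
          = ∑ ω : ι → Bool, ∏ i,
              (if i ∈ E ∧ ω i = true then (0:ℝ) else (if ω i = true then p else 1 - p)) :=
            Finset.sum_congr rfl fun ω _ => hpt ω
        _ = ∏ i : ι, ((if i ∈ E ∧ (true : Bool) = true then (0:ℝ)
                else (if (true : Bool) = true then p else 1 - p))
              + (if i ∈ E ∧ (false : Bool) = true then (0:ℝ)
                else (if (false : Bool) = true then p else 1 - p))) :=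
            sum_fun_bool (fun i b => if i ∈ E ∧ b = true then (0:ℝ)
              else (if b = true then p else 1 - p))
        _ = ∏ i, (if i ∈ E then (1 - p) else 1) := by
            refine Finset.prod_congr rfl fun i _ => ?_
            by_cases hiE : i ∈ E <;> simp [hiE]
        _ = (1 - p) ^ E.card := by
            rw [Finset.prod_ite_mem, Finset.univ_inter, Finset.prod_const]
    rw [hw1, hw2]
  -- F is constant on E
  have hFconst : ∀ e1 ∈ E, ∀ e2 ∈ E, F e1 = F e2 := by
    intro e1 he1 e2 he2
    have hmem : ∀ i, Equiv.swap e1 e2 i ∈ E ↔ i ∈ E := by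
      intro i
      rcases eq_or_ne i e1 with rfl | h1
      · simp [Equiv.swap_apply_left, he1, he2]
      rcases eq_or_ne i e2 with rfl | h2
      · simp [Equiv.swap_apply_right, he1, he2]
      · rw [Equiv.swap_apply_of_ne_of_ne h1 h2]
    simp only [hF]
    have := Equiv.sum_comp ((Equiv.swap e1 e2).arrowCongr (Equiv.refl Bool))
      (fun ω : ι → Bool => w ω * (if ω e2 then (1:ℝ) else 0) / T ω)
    rw [← this]
    refine Finset.sum_congr rfl fun ω _ => ?_
    have happ : ∀ i, ((Equiv.swap e1 e2).arrowCongr (Equiv.refl Bool) ω) i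
        = ω (Equiv.swap e1 e2 i) := by
      intro i
      simp [Equiv.arrowCongr, Equiv.swap_inv]
    have hwin : w ((Equiv.swap e1 e2).arrowCongr (Equiv.refl Bool) ω) = w ω := by
      rw [hw]
      simp only [happ]
      exact Equiv.prod_comp (Equiv.swap e1 e2) (fun i => if ω i then p else 1 - p)
    have hTin : T ((Equiv.swap e1 e2).arrowCongr (Equiv.refl Bool) ω) = T ω := by
      rw [hT]
      simp only [happ]
      exact Finset.sum_equiv (Equiv.swap e1 e2) (fun i => (hmem i).symm)
        (fun i _ => rfl)
    rw [hwin, hTin, happ e2, Equiv.swap_apply_right]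
  have hn : (0:ℝ) < E.card := by exact_mod_cast hE.card_pos
  have hFval : ∀ e ∈ E, F e = (1 - (1 - p) ^ E.card) / E.card := by
    intro e he
    have : ∑ e' ∈ E, F e' = E.card * F e := by
      rw [Finset.sum_congr rfl fun e' he' => hFconst e' he' e he, Finset.sum_const,
        nsmul_eq_mul]
    rw [hsumF] at this
    rw [eq_div_iff hn.ne']
    linarith
  -- conclude
  calc ∑ ω : ι → Bool, w ω * ((∑ e ∈ E, if ω e then r e else 0) / T ω)
      = ∑ ω : ι → Bool, ∑ e ∈ E, r e * (w ω * (if ω e then (1:ℝ) else 0) / T ω) := by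
        refine Finset.sum_congr rfl fun ω _ => ?_
        rw [Finset.sum_div, Finset.mul_sum]
        refine Finset.sum_congr rfl fun e _ => ?_
        cases h : ω e <;> simp [h] <;> ring
    _ = ∑ e ∈ E, r e * F e := by
        rw [Finset.sum_comm]
        exact Finset.sum_congr rfl fun e _ => by rw [hF, Finset.mul_sum]
    _ = (1 - (1 - p) ^ E.card) / E.card * ∑ e ∈ E, r e := by
        rw [Finset.sum_congr rfl fun e he => by rw [hFval e he], ← Finset.sum_mul]
        ring

end aux

theorem stmt_16 (q d : ℕ) (hd : 0 < d)
    (Q : Finset (Fin q)) (hQ : Q.Nonempty)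
    (rho : Fin d → ℝ) (hrho : ∀ j, 0 < rho j)
    (p : ℝ) (hp0 : 0 < p) (hp1 : p ≤ 1)
    (hple : ENNReal.ofReal p ≤ 1)
    (μ : Measure (Fin q × Fin d → Bool))
    (hμ : μ = Measure.pi (fun _ : Fin q × Fin d =>
        (PMF.bernoulli (Real.toNNReal p) (ENNReal.coe_le_one_iff.mp hple)).toMeasure))
    (deg : (Fin q × Fin d → Bool) → ℝ)
    (hdeg : ∀ ω, deg ω = ∑ i ∈ Q, ∑ j, (if ω (i, j) then (1:ℝ) else 0))
    (P : (Fin q × Fin d → Bool) → ℝ)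
    (hP : ∀ ω, P ω = (∑ i ∈ Q, ∑ j, (if ω (i, j) then rho j else 0)) / deg ω) :
    (∫ ω, P ω ∂μ) = ((1 - (1 - p) ^ (d * Q.card)) / d) * ∑ j, rho j
    ∧ ((∫ ω, P ω ∂μ) < 1 ↔
        (1 / (d : ℝ)) * ∑ j, rho j < 1 / (1 - (1 - p) ^ (d * Q.card))) := by
  subst hμ
  haveI : Nonempty (Fin d) := ⟨⟨0, hd⟩⟩
  set ν := (PMF.bernoulli (Real.toNNReal p) (ENNReal.coe_le_one_iff.mp hple)).toMeasure with hν
  set E : Finset (Fin q × Fin d) := Q ×ˢ (univ : Finset (Fin d)) with hE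
  have hEne : E.Nonempty := hQ.product univ_nonempty
  have hEcard : E.card = Q.card * d := by
    rw [hE, Finset.card_product, Finset.card_univ, Fintype.card_fin]
  have hmain : (∫ ω, P ω ∂(Measure.pi fun _ => ν))
      = ((1 - (1 - p) ^ (d * Q.card)) / d) * ∑ j, rho j := by
    rw [integral_fintype (Integrable.of_finite)]
    have hsingle : ∀ ω : Fin q × Fin d → Bool,
        ((Measure.pi fun _ => ν) {ω}).toReal = ∏ e, (if ω e then p else 1 - p) := by
      intro ω
      rw [← Set.univ_pi_singleton ω, Measure.pi_pi, ENNReal.toReal_prod]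
      refine Finset.prod_congr rfl fun e _ => ?_
      rw [hν, PMF.toMeasure_apply_singleton _ _ (measurableSet_singleton _),
        PMF.bernoulli_apply]
      cases h : ω e
      · show (1 - ENNReal.ofReal p).toReal = 1 - p
        rw [ENNReal.toReal_sub_of_le hple ENNReal.one_ne_top,
          ENNReal.toReal_one, ENNReal.toReal_ofReal hp0.le]
      · show (ENNReal.ofReal p).toReal = p
        exact ENNReal.toReal_ofReal hp0.le
    have hPval : ∀ ω, P ω = (∑ e ∈ E, if ω e then rho e.2 else 0) /
        (∑ e ∈ E, if ω e then (1:ℝ) else 0) := by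
      intro ω
      rw [hP, hdeg, hE, Finset.sum_product, Finset.sum_product]
    calc ∑ ω : Fin q × Fin d → Bool, ((Measure.pi fun _ => ν) {ω}).toReal • P ω
        = ∑ ω : Fin q × Fin d → Bool, (∏ e, (if ω e then p else 1 - p)) *
            ((∑ e ∈ E, if ω e then rho e.2 else 0) /
              (∑ e ∈ E, if ω e then (1:ℝ) else 0)) := by
          refine Finset.sum_congr rfl fun ω _ => ?_
          rw [smul_eq_mul, hsingle, hPval]
      _ = (1 - (1 - p) ^ E.card) / E.card * ∑ e ∈ E, rho e.2 :=
          key E hEne p hp0.le hp1 _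
      _ = ((1 - (1 - p) ^ (d * Q.card)) / d) * ∑ j, rho j := by
          have hsum : ∑ e ∈ E, rho e.2 = Q.card * ∑ j, rho j := by
            rw [hE, Finset.sum_product]
            simp [Finset.sum_const, nsmul_eq_mul]
          have hQ0 : (0:ℝ) < Q.card := by exact_mod_cast hQ.card_pos
          have hd0 : (0:ℝ) < d := by exact_mod_cast hd
          rw [hsum, hEcard, mul_comm Q.card d]
          push_cast
          field_simp
  refine ⟨hmain, ?_⟩
  rw [hmain]
  have hd0 : (0:ℝ) < d := by exact_mod_cast hd
  have hc : 0 < 1 - (1 - p) ^ (d * Q.card) := by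
    have hn : d * Q.card ≠ 0 := by positivity
    have : (1 - p) ^ (d * Q.card) < 1 :=
      pow_lt_one₀ (by linarith) (by linarith) hn
    linarith
  set c := 1 - (1 - p) ^ (d * Q.card)
  set S := ∑ j, rho j
  rw [div_mul_eq_mul_div, div_lt_one hd0, one_div_mul_eq_div, div_lt_div_iff₀ hd0 hc]
  constructor <;> intro h <;> nlinarith
end
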